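/- (Weight-zero case of the paper's Lemma identifying the bottom steps of the p-saturated filtration.) For every n ≥ 1: Fil^p_0 Wₙ(L) = Wₙ(O) and Fil^p_1 Wₙ(L) = Wₙ(O). -/
import Mathlib


noncomputable section

open scoped Classical

/-- A discretely valued field: a field `L` together with a normalized additive valuation
`v : L → ℤ ∪ {∞}` and a uniformizer `z` (so `v z = 1`).  The valuation ring is
`O = {a : L | 0 ≤ v a}`, with maximal ideal `𝔪 = {a : L | 1 ≤ v a}`. -/
structure DVField (L : Type) [Field L] : Type where
  v : L → WithTop ℤ
  z : L
  v_top : ∀ a : L, v a = ⊤ ↔ a = 0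
  v_mul : ∀ a b : L, v (a * b) = v a + v b
  v_add : ∀ a b : L, min (v a) (v b) ≤ v (a + b)
  v_z : v z = 1

namespace DVField

variable {L : Type} [Field L]

/-- `Wₙ(O) ⊆ Wₙ(L)`: the truncated Witt vectors all of whose components are integral. -/
def WO (D : DVField L) (p n : ℕ) : Set (TruncatedWittVector p n L) :=
  {x | ∀ i : Fin n, 0 ≤ D.v (x.coeff i)}

/-- The Brylinski–Kato filtration
`fil^log_r Wₙ(L) = {(a₀, …, a_{n-1}) | p^{n-1-i} · v(aᵢ) ≥ -r for all i}`. -/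
def filLog (D : DVField L) (p r n : ℕ) : Set (TruncatedWittVector p n L) :=
  {x | ∀ i : Fin n, (↑(-(r : ℤ)) : WithTop ℤ) ≤ p ^ (n - 1 - (i : ℕ)) • D.v (x.coeff i)}

end DVField

/-- The Verschiebung `V : Wₙ(L) → W_{n+1}(L)`, shifting components. -/
def wV {p : ℕ} {L : Type} [Field L] {n : ℕ} (x : TruncatedWittVector p n L) :
    TruncatedWittVector p (n + 1) L :=
  TruncatedWittVector.mk p fun i =>
    if h : (i : ℕ) = 0 then 0 else x.coeff ⟨(i : ℕ) - 1, by have := i.isLt; omega⟩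

/-- The iterated Verschiebung `V^{n-m} : W_m(L) → Wₙ(L)` (for `m ≤ n`), given by shifting
components by `n - m`. -/
def wVit {p : ℕ} {L : Type} [Field L] {m n : ℕ} (x : TruncatedWittVector p m L) :
    TruncatedWittVector p n L :=
  TruncatedWittVector.mk p fun i =>
    if h : n - m ≤ (i : ℕ) ∧ (i : ℕ) - (n - m) < m then x.coeff ⟨(i : ℕ) - (n - m), h.2⟩ else 0

/-- The restriction `R : W_{n+1}(L) → Wₙ(L)`, dropping the last component. -/
def wR {p : ℕ} {L : Type} [Field L] {n : ℕ} (x : TruncatedWittVector p (n + 1) L) :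
    TruncatedWittVector p n L :=
  TruncatedWittVector.mk p fun i => x.coeff i.castSucc

/-- The iterated restriction `R^{m-n} : W_m(L) → Wₙ(L)` (for `n ≤ m`), keeping the first `n`
components. -/
def wRes {p : ℕ} {L : Type} [Field L] {m n : ℕ} (x : TruncatedWittVector p m L) :
    TruncatedWittVector p n L :=
  TruncatedWittVector.mk p fun i => if h : (i : ℕ) < m then x.coeff ⟨(i : ℕ), h⟩ else 0

/-- The Frobenius `F : W_{n+1}(L) → Wₙ(L)` in characteristic `p`:
componentwise `p`-th power followed by restriction. -/
def wF {p : ℕ} {L : Type} [Field L] {n : ℕ} (x : TruncatedWittVector p (n + 1) L) :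
    TruncatedWittVector p n L :=
  TruncatedWittVector.mk p fun i => x.coeff i.castSucc ^ p

/-- The Teichmüller lift `[a] = (a, 0, …, 0)`. -/
def wT (p : ℕ) {L : Type} [Field L] (n : ℕ) (a : L) : TruncatedWittVector p n L :=
  TruncatedWittVector.mk p fun i => if (i : ℕ) = 0 then a else 0

/-- The map `p̲ : Wₙ(L) → W_{n+1}(L)`: lift to length `n+1` (by appending a zero component)
and multiply by `p`. -/
def wP {p : ℕ} [Fact p.Prime] {L : Type} [Field L] {n : ℕ} (x : TruncatedWittVector p n L) :
    TruncatedWittVector p (n + 1) L :=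
  p • (wRes x : TruncatedWittVector p (n + 1) L)

namespace DVField

variable {L : Type} [Field L]

/-- The Kato–Matsuda filtration
`fil_r Wₙ(L) = fil^log_{r-1} Wₙ(L) + V^{n-m}(fil^log_r W_m(L))` where `m = min(v_p(r), n)`,
and `fil_0 Wₙ(L) = Wₙ(O)`. -/
def filKM (D : DVField L) (p : ℕ) [Fact p.Prime] (r n : ℕ) :
    Set (TruncatedWittVector p n L) :=
  if r = 0 then D.WO p n
  else {x | ∃ a ∈ D.filLog p (r - 1) n,
    ∃ b ∈ D.filLog p r (min (padicValNat p r) n), x = a + wVit b}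

/-- The `p`-saturation `Fil^p_r Wₙ(L) = Σ_{s=0}^{n-1} p^s · fil_{r·p^s} Wₙ(L)`. -/
def FilP (D : DVField L) (p : ℕ) [Fact p.Prime] (r n : ℕ) :
    Set (TruncatedWittVector p n L) :=
  {x | ∃ f : Fin n → TruncatedWittVector p n L,
      (∀ s : Fin n, f s ∈ D.filKM p (r * p ^ (s : ℕ)) n) ∧
      x = ∑ s : Fin n, p ^ (s : ℕ) • f s}

end DVField

section Aux

lemma nsmul_coe_withTop (m : ℕ) (k : ℤ) :
    m • ((k : WithTop ℤ)) = (((m : ℤ) * k : ℤ) : WithTop ℤ) := by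
  induction m with
  | zero => simp
  | succ m ih =>
      rw [succ_nsmul, ih, ← WithTop.coe_add]
      congr 1
      push_cast
      ring

lemma nsmul_top_withTop (m : ℕ) (hm : m ≠ 0) : m • (⊤ : WithTop ℤ) = ⊤ := by
  obtain ⟨k, rfl⟩ := Nat.exists_eq_succ_of_ne_zero hm
  rw [succ_nsmul]
  exact add_top _

namespace DVField

variable {L : Type} [Field L]

lemma v_zero (D : DVField L) : D.v 0 = ⊤ := (D.v_top 0).mpr rfl

lemma v_one (D : DVField L) : D.v 1 = 0 := by
  have h := D.v_mul 1 1
  rw [mul_one] at h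
  obtain ⟨k, hk⟩ := WithTop.ne_top_iff_exists.mp
    (fun ht => one_ne_zero ((D.v_top 1).mp ht))
  rw [← hk] at h ⊢
  rw [← WithTop.coe_add] at h
  have hk2 := WithTop.coe_inj.mp h
  have : k = 0 := by omega
  simp [this]

lemma v_neg_one (D : DVField L) : D.v (-1 : L) = 0 := by
  have h := D.v_mul (-1) (-1)
  rw [neg_mul, one_mul, neg_neg, D.v_one] at h
  obtain ⟨k, hk⟩ := WithTop.ne_top_iff_exists.mp
    (fun ht => (by norm_num : (-1 : L) ≠ 0) ((D.v_top (-1)).mp ht))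
  rw [← hk] at h ⊢
  rw [← WithTop.coe_add] at h
  have hk2 := WithTop.coe_inj.mp h.symm
  have : k = 0 := by omega
  simp [this]

lemma v_neg (D : DVField L) (a : L) : D.v (-a) = D.v a := by
  have := D.v_mul (-1) a
  rw [neg_mul, one_mul, D.v_neg_one, zero_add] at this
  exact this

lemma v_pow (D : DVField L) (a : L) (m : ℕ) : D.v (a ^ m) = m • D.v a := by
  induction m with
  | zero => rw [pow_zero, D.v_one, zero_nsmul]
  | succ m ih => rw [pow_succ, D.v_mul, ih, succ_nsmul]

/-- The valuation subring `O = {a : L | 0 ≤ v a}`. -/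
def intSubring (D : DVField L) : Subring L where
  carrier := {a | 0 ≤ D.v a}
  zero_mem' := by simp only [Set.mem_setOf_eq, D.v_zero]; exact le_top
  one_mem' := by simp only [Set.mem_setOf_eq, D.v_one]; exact le_refl _
  add_mem' := fun {a b} ha hb => le_trans (le_min ha hb) (D.v_add a b)
  mul_mem' := fun {a b} ha hb => by
    simp only [Set.mem_setOf_eq, D.v_mul] at *
    exact add_nonneg ha hb
  neg_mem' := fun {a} ha => by
    simp only [Set.mem_setOf_eq, D.v_neg] at *
    exact ha

lemma mem_intSubring (D : DVField L) (a : L) : a ∈ D.intSubring ↔ 0 ≤ D.v a := Iff.rfl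

variable (p : ℕ) [hp : Fact p.Prime]

/-- The ring hom `Wₙ(O) → Wₙ(L)` whose range is `WO`. -/
noncomputable def WOhom (D : DVField L) (n : ℕ) :
    WittVector p D.intSubring →+* TruncatedWittVector p n L :=
  (WittVector.truncate n).comp (WittVector.map (D.intSubring.subtype))

lemma WO_eq_range (D : DVField L) (n : ℕ) :
    D.WO p n = ((D.WOhom p n).range : Set (TruncatedWittVector p n L)) := by
  ext x
  constructor
  · intro hx
    refine ⟨WittVector.mk p (fun i => if h : i < n then ⟨x.coeff ⟨i, h⟩, hx ⟨i, h⟩⟩ else 0), ?_⟩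
    apply TruncatedWittVector.ext
    intro i
    simp only [WOhom, RingHom.coe_comp, Function.comp_apply]
    rw [WittVector.coeff_truncate, WittVector.map_coeff]
    simp only [WittVector.coeff_mk]
    rw [dif_pos i.isLt]
    rfl
  · rintro ⟨y, rfl⟩
    intro i
    show 0 ≤ D.v ((D.WOhom p n y).coeff i)
    simp only [WOhom, RingHom.coe_comp, Function.comp_apply]
    rw [WittVector.coeff_truncate, WittVector.map_coeff]
    exact (y.coeff i).2

lemma zero_mem_filLog (D : DVField L) (r n : ℕ) : (0 : TruncatedWittVector p n L) ∈ D.filLog p r n := by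
  intro i
  rw [TruncatedWittVector.coeff_zero, D.v_zero,
    nsmul_top_withTop _ (pow_ne_zero _ hp.out.ne_zero)]
  exact le_top

lemma WO_subset_filLog (D : DVField L) (r n : ℕ) {x : TruncatedWittVector p n L}
    (hx : x ∈ D.WO p n) : x ∈ D.filLog p r n := by
  intro i
  have h0 : (0 : WithTop ℤ) ≤ p ^ (n - 1 - (i : ℕ)) • D.v (x.coeff i) :=
    nsmul_nonneg (hx i) _
  refine le_trans ?_ h0
  exact_mod_cast neg_nonpos.mpr (by exact_mod_cast Nat.zero_le r)

end DVField

section Coeffs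

variable {p : ℕ} [hp : Fact p.Prime] {L : Type} [Field L] [CharP L p]

lemma truncate_out {n : ℕ} (x : TruncatedWittVector p n L) :
    WittVector.truncate n x.out = x := by
  apply TruncatedWittVector.ext
  intro i
  rw [WittVector.coeff_truncate, TruncatedWittVector.coeff_out]

lemma psmul_coeff {n : ℕ} (x : TruncatedWittVector p n L) (i : Fin n) :
    (p • x).coeff i =
      if h : 0 < (i : ℕ) then x.coeff ⟨(i : ℕ) - 1, by omega⟩ ^ p else 0 := by
  have h1 : p • x = WittVector.truncate n (p • x.out) := by
    rw [map_nsmul, truncate_out]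
  have h2 : p • x.out = x.out * p := by rw [nsmul_eq_mul, mul_comm]
  rw [h1, h2, WittVector.coeff_truncate]
  rcases i with ⟨iv, hiv⟩
  cases iv with
  | zero => simp [WittVector.mul_charP_coeff_zero]
  | succ j =>
      rw [dif_pos (Nat.succ_pos j)]
      show (x.out * (p : WittVector p L)).coeff (j + 1) = _
      rw [WittVector.mul_charP_coeff_succ]
      exact congrArg (· ^ p) (TruncatedWittVector.coeff_out x ⟨j + 1 - 1, by omega⟩)

lemma ppow_smul_coeff {n : ℕ} (s : ℕ) (x : TruncatedWittVector p n L) (i : Fin n) :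
    (p ^ s • x).coeff i =
      if h : s ≤ (i : ℕ) then x.coeff ⟨(i : ℕ) - s, by omega⟩ ^ p ^ s else 0 := by
  induction s generalizing i with
  | zero =>
      rw [pow_zero, one_smul, dif_pos (Nat.zero_le _), pow_one]
      rfl
  | succ s ih =>
      have hmul : p ^ (s + 1) • x = p • (p ^ s • x) := by
        rw [pow_succ', mul_smul]
      rw [hmul, psmul_coeff]
      by_cases h0 : 0 < (i : ℕ)
      · rw [dif_pos h0, ih]
        by_cases hs : s + 1 ≤ (i : ℕ)
        · rw [dif_pos (by simp only [Fin.val_mk]; omega), dif_pos hs]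
          rw [← pow_mul, ← pow_succ]
          congr 2
          exact Fin.ext (by simp only [Fin.val_mk]; omega)
        · rw [dif_neg (by simp only [Fin.val_mk]; omega), dif_neg hs,
            zero_pow hp.out.ne_zero]
      · rw [dif_neg h0, dif_neg (by omega)]

lemma ppow_smul_wVit_eq_zero {m n s : ℕ} (hm : m ≤ s) (b : TruncatedWittVector p m L) :
    p ^ s • (wVit b : TruncatedWittVector p n L) = 0 := by
  apply TruncatedWittVector.ext
  intro j
  rw [ppow_smul_coeff, TruncatedWittVector.coeff_zero]
  by_cases h : s ≤ (j : ℕ)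
  · rw [dif_pos h]
    have hj := j.isLt
    show (TruncatedWittVector.mk p _).coeff _ ^ _ = 0
    rw [TruncatedWittVector.coeff_mk]
    rw [dif_neg (by simp only [not_and]; intro h1; omega)]
    exact zero_pow (pow_ne_zero _ hp.out.ne_zero)
  · rw [dif_neg h]

lemma wVit_zero {m n : ℕ} : (wVit (0 : TruncatedWittVector p m L) : TruncatedWittVector p n L) = 0 := by
  apply TruncatedWittVector.ext
  intro j
  show (TruncatedWittVector.mk p _).coeff _ = _
  rw [TruncatedWittVector.coeff_mk, TruncatedWittVector.coeff_zero]
  split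
  · rw [TruncatedWittVector.coeff_zero]
  · rfl

variable (D : DVField L)

lemma ppow_smul_mem_WO {n s : ℕ} {a : TruncatedWittVector p n L}
    (ha : a ∈ D.filLog p (p ^ s - 1) n) :
    p ^ s • a ∈ D.WO p n := by
  intro j
  rw [ppow_smul_coeff]
  by_cases h : s ≤ (j : ℕ)
  · rw [dif_pos h]
    set i : Fin n := ⟨(j : ℕ) - s, by omega⟩ with hi
    rw [D.v_pow]
    rcases eq_or_ne (a.coeff i) 0 with h0 | h0
    · rw [h0, D.v_zero, nsmul_top_withTop _ (pow_ne_zero _ hp.out.ne_zero)]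
      exact le_top
    · obtain ⟨k, hk⟩ := WithTop.ne_top_iff_exists.mp (fun ht => h0 ((D.v_top _).mp ht))
      have hik := ha i
      rw [← hk, nsmul_coe_withTop] at hik ⊢
      set e : ℕ := n - 1 - ((i : ℕ)) with he
      have hse : s ≤ e := by have := j.isLt; simp only [hi, he]; omega
      have hps1 : (1 : ℕ) ≤ p ^ s := Nat.one_le_pow _ _ hp.out.pos
      have hpse : p ^ s ≤ p ^ e := Nat.pow_le_pow_right hp.out.pos hse
      have hik' := WithTop.coe_le_coe.mp hik
      have hcast : ((p ^ s - 1 : ℕ) : ℤ) = ((p ^ s : ℕ) : ℤ) - 1 := by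
        rw [Nat.cast_sub hps1]; norm_num
      have hpe : (0 : ℤ) < ((p ^ e : ℕ) : ℤ) := by
        exact_mod_cast pow_pos hp.out.pos e
      have hk0 : 0 ≤ k := by
        by_contra hneg
        push_neg at hneg
        have hk1 : k ≤ -1 := by omega
        have h2 : ((p ^ e : ℕ) : ℤ) * k ≤ -((p ^ e : ℕ) : ℤ) := by nlinarith
        have h3 : ((p ^ s : ℕ) : ℤ) ≤ ((p ^ e : ℕ) : ℤ) := by exact_mod_cast hpse
        rw [hcast] at hik'
        omega
      have hfin : (0 : ℤ) ≤ ((p ^ s : ℕ) : ℤ) * k :=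
        mul_nonneg (by positivity) hk0
      exact_mod_cast hfin
  · rw [dif_neg h, D.v_zero]
    exact le_top

end Coeffs

end Aux

/-- (Weight-zero bottom steps of the `p`-saturated filtration.)
For every `n ≥ 1`: `Fil^p_0 Wₙ(L) = Wₙ(O)` and `Fil^p_1 Wₙ(L) = Wₙ(O)`. -/
theorem statement4 (p : ℕ) [Fact p.Prime] (L : Type) [Field L] [CharP L p]
    (D : DVField L) (n : ℕ) (hn : 1 ≤ n) :
    D.FilP p 0 n = D.WO p n ∧ D.FilP p 1 n = D.WO p n := by
  have hWOsum : ∀ (g : Fin n → TruncatedWittVector p n L),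
      (∀ s : Fin n, p ^ (s : ℕ) • g s ∈ D.WO p n) →
      (∑ s : Fin n, p ^ (s : ℕ) • g s) ∈ D.WO p n := by
    intro g hg
    rw [D.WO_eq_range p n] at hg ⊢
    exact sum_mem (fun s _ => hg s)
  have hzero : ∀ m, (0 : TruncatedWittVector p m L) ∈ D.WO p m := by
    intro m i
    rw [TruncatedWittVector.coeff_zero, D.v_zero]
    exact le_top
  have hsumx : ∀ x : TruncatedWittVector p n L,
      x = ∑ s : Fin n, p ^ (s : ℕ) •
        (if s = (⟨0, hn⟩ : Fin n) then x else 0) := by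
    intro x
    rw [Finset.sum_eq_single (⟨0, hn⟩ : Fin n)
      (fun b _ hb => by rw [if_neg hb, smul_zero])
      (fun h => absurd (Finset.mem_univ _) h)]
    simp
  constructor
  · ext x
    constructor
    · rintro ⟨f, hf, rfl⟩
      apply hWOsum
      intro s
      have hs := hf s
      rw [DVField.filKM, if_pos (zero_mul _)] at hs
      rw [D.WO_eq_range p n] at hs ⊢
      exact nsmul_mem hs _
    · intro hx
      refine ⟨fun s => if s = (⟨0, hn⟩ : Fin n) then x else 0, ?_, hsumx x⟩
      intro s
      dsimp only
      rw [DVField.filKM, if_pos (zero_mul _)]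
      split
      · exact hx
      · exact hzero n
  · ext x
    constructor
    · rintro ⟨f, hf, rfl⟩
      apply hWOsum
      intro s
      have hs := hf s
      have hps : (1 * p ^ (s : ℕ)) ≠ 0 := by
        rw [one_mul]
        exact pow_ne_zero _ (Fact.out : p.Prime).ne_zero
      rw [DVField.filKM, if_neg hps] at hs
      obtain ⟨a, ha, b, _, hab⟩ := hs
      have hm : min (padicValNat p (1 * p ^ (s : ℕ))) n ≤ (s : ℕ) := by
        rw [one_mul, padicValNat.prime_pow]
        exact min_le_left _ _
      rw [hab, smul_add, ppow_smul_wVit_eq_zero hm b, add_zero]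
      rw [one_mul] at ha
      exact ppow_smul_mem_WO D ha
    · intro hx
      refine ⟨fun s => if s = (⟨0, hn⟩ : Fin n) then x else 0, ?_, hsumx x⟩
      intro s
      have hps : (1 * p ^ (s : ℕ)) ≠ 0 := by
        rw [one_mul]
        exact pow_ne_zero _ (Fact.out : p.Prime).ne_zero
      rw [DVField.filKM, if_neg hps]
      refine ⟨if s = (⟨0, hn⟩ : Fin n) then x else 0, ?_, 0,
        D.zero_mem_filLog p _ _, by dsimp only; rw [wVit_zero, add_zero]⟩
      split
      · exact D.WO_subset_filLog p _ n hx
      · exact D.zero_mem_filLog p _ n
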